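/- For n = 3, the number of a-list assignments up to proper-intersection equivalence is |L(3,a)| = (a⁴ + 8a³ + 24a² + 32a + 16 − ε(a))/16, where ε(a) = 1 if a is odd and 0 if a is even. -/

import Mathlib

open Finset

/-- Pairs with sum at most `c`. -/
def triC (c : ℕ) : Finset (ℕ × ℕ) :=
  (range (c+1) ×ˢ range (c+1)).filter fun v => v.1 + v.2 ≤ c

/-- Triples with pairwise sums at most `b`. -/
def MC (b : ℕ) : Finset (ℕ × ℕ × ℕ) :=
  (range (b+1) ×ˢ range (b+1) ×ˢ range (b+1)).filter fun v =>
    v.1 + v.2.1 ≤ b ∧ v.1 + v.2.2 ≤ b ∧ v.2.1 + v.2.2 ≤ b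

/-- Quadruples `(p,q,r,t)` with `p+q+t ≤ a`, `p+r+t ≤ a`, `q+r+t ≤ a`. -/
def TQ (a : ℕ) : Finset (ℕ × ℕ × ℕ × ℕ) :=
  (range (a+1) ×ˢ range (a+1) ×ˢ range (a+1) ×ˢ range (a+1)).filter fun v =>
    v.1 + v.2.1 + v.2.2.2 ≤ a ∧ v.1 + v.2.2.1 + v.2.2.2 ≤ a ∧ v.2.1 + v.2.2.1 + v.2.2.2 ≤ a

lemma triC_succ (c : ℕ) : (triC (c+1)).card = (triC c).card + (c + 2) := by
  have h := Finset.card_filter_add_card_filter_not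
    (s := triC (c+1)) (p := fun v => v.2 = 0)
  have h1 : ((triC (c+1)).filter fun v => v.2 = 0).card = c + 2 := by
    rw [show c + 2 = (range (c+2)).card from (card_range _).symm]
    refine card_nbij' (fun v => v.1) (fun x => (x, 0)) ?_ ?_ ?_ ?_ <;>
      simp only [triC, mem_filter, mem_product, mem_range, mem_coe, Set.MapsTo, Set.LeftInvOn, Set.RightInvOn, Set.EqOn, Prod.forall,
        Prod.mk.injEq, and_true, true_and] <;> intros <;> (try exact trivial) <;> omega
  have h2 : ((triC (c+1)).filter fun v => ¬ v.2 = 0).card = (triC c).card := by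
    refine card_nbij' (fun v => (v.1, v.2 - 1)) (fun v => (v.1, v.2 + 1)) ?_ ?_ ?_ ?_ <;>
      simp only [triC, mem_filter, mem_product, mem_range, mem_coe, Set.MapsTo, Set.LeftInvOn, Set.RightInvOn, Set.EqOn, Prod.forall,
        Prod.mk.injEq, and_true, true_and] <;> intros <;> (try exact trivial) <;> omega
  omega

lemma triC_card (c : ℕ) : (triC c).card * 2 = (c + 1) * (c + 2) := by
  induction c with
  | zero => rfl
  | succ c ih =>
    rw [triC_succ, Nat.add_mul, ih]
    ring

lemma MC_rec (b : ℕ) :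
    (MC (b+2)).card
      = (MC b).card + ((triC (b+2)).card + (triC (b+1)).card + (triC b).card) := by
  have h0 := Finset.card_filter_add_card_filter_not
    (s := MC (b+2)) (p := fun v => v.1 = 0)
  have h1 := Finset.card_filter_add_card_filter_not
    (s := (MC (b+2)).filter fun v => ¬ v.1 = 0) (p := fun v => v.2.1 = 0)
  have h2 := Finset.card_filter_add_card_filter_not
    (s := ((MC (b+2)).filter fun v => ¬ v.1 = 0).filter fun v => ¬ v.2.1 = 0)
    (p := fun v => v.2.2 = 0)
  have e0 : ((MC (b+2)).filter fun v => v.1 = 0).card = (triC (b+2)).card := by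
    refine card_nbij' (fun v => (v.2.1, v.2.2)) (fun w => (0, w.1, w.2)) ?_ ?_ ?_ ?_ <;>
      simp only [MC, triC, mem_filter, mem_product, mem_range, mem_coe, Set.MapsTo, Set.LeftInvOn, Set.RightInvOn, Set.EqOn, Prod.forall,
        Prod.mk.injEq, and_true, true_and] <;> intros <;> (try exact trivial) <;> omega
  have e1 : (((MC (b+2)).filter fun v => ¬ v.1 = 0).filter fun v => v.2.1 = 0).card
      = (triC (b+1)).card := by
    refine card_nbij' (fun v => (v.1 - 1, v.2.2)) (fun w => (w.1 + 1, 0, w.2)) ?_ ?_ ?_ ?_ <;>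
      simp only [MC, triC, mem_filter, mem_product, mem_range, mem_coe, Set.MapsTo, Set.LeftInvOn, Set.RightInvOn, Set.EqOn, Prod.forall,
        Prod.mk.injEq, and_true, true_and] <;> intros <;> (try exact trivial) <;> omega
  have e2 : ((((MC (b+2)).filter fun v => ¬ v.1 = 0).filter fun v => ¬ v.2.1 = 0).filter
      fun v => v.2.2 = 0).card = (triC b).card := by
    refine card_nbij' (fun v => (v.1 - 1, v.2.1 - 1)) (fun w => (w.1 + 1, w.2 + 1, 0))
        ?_ ?_ ?_ ?_ <;>
      simp only [MC, triC, mem_filter, mem_product, mem_range, mem_coe, Set.MapsTo, Set.LeftInvOn, Set.RightInvOn, Set.EqOn, Prod.forall,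
        Prod.mk.injEq, and_true, true_and] <;> intros <;> (try exact trivial) <;> omega
  have e3 : ((((MC (b+2)).filter fun v => ¬ v.1 = 0).filter fun v => ¬ v.2.1 = 0).filter
      fun v => ¬ v.2.2 = 0).card = (MC b).card := by
    refine card_nbij' (fun v => (v.1 - 1, v.2.1 - 1, v.2.2 - 1))
        (fun w => (w.1 + 1, w.2.1 + 1, w.2.2 + 1)) ?_ ?_ ?_ ?_ <;>
      simp only [MC, mem_filter, mem_product, mem_range, mem_coe, Set.MapsTo, Set.LeftInvOn, Set.RightInvOn, Set.EqOn, Prod.forall,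
        Prod.mk.injEq, and_true, true_and] <;> intros <;> (try exact trivial) <;> omega
  omega

lemma G_card (b : ℕ) :
    (MC b).card * 2 + (MC (b+1)).card * 2 = b ^ 3 + 6 * b ^ 2 + 13 * b + 10 := by
  induction b with
  | zero => rfl
  | succ b ih =>
    have hr := MC_rec b
    have t0 := triC_card b
    have t1 := triC_card (b+1)
    have t2 := triC_card (b+2)
    zify at hr t0 t1 t2 ih ⊢
    linear_combination ih + 2 * hr + t2 + t1 + t0

lemma TC_succ (a : ℕ) : (TQ (a+1)).card = (TQ a).card + (MC (a+1)).card := by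
  have h := Finset.card_filter_add_card_filter_not
    (s := TQ (a+1)) (p := fun v => v.2.2.2 = 0)
  have h1 : ((TQ (a+1)).filter fun v => v.2.2.2 = 0).card = (MC (a+1)).card := by
    refine card_nbij' (fun v => (v.1, v.2.1, v.2.2.1)) (fun w => (w.1, w.2.1, w.2.2, 0))
        ?_ ?_ ?_ ?_ <;>
      simp only [TQ, MC, mem_filter, mem_product, mem_range, mem_coe, Set.MapsTo, Set.LeftInvOn, Set.RightInvOn, Set.EqOn, Prod.forall,
        Prod.mk.injEq, and_true, true_and] <;> intros <;> (try exact trivial) <;> omega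
  have h2 : ((TQ (a+1)).filter fun v => ¬ v.2.2.2 = 0).card = (TQ a).card := by
    refine card_nbij' (fun v => (v.1, v.2.1, v.2.2.1, v.2.2.2 - 1))
        (fun w => (w.1, w.2.1, w.2.2.1, w.2.2.2 + 1)) ?_ ?_ ?_ ?_ <;>
      simp only [TQ, mem_filter, mem_product, mem_range, mem_coe, Set.MapsTo, Set.LeftInvOn, Set.RightInvOn, Set.EqOn, Prod.forall,
        Prod.mk.injEq, and_true, true_and] <;> intros <;> (try exact trivial) <;> omega
  omega

lemma TC_card (a : ℕ) :
    (TQ a).card * 16 + (if Odd a then 1 else 0)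
      = a ^ 4 + 8 * a ^ 3 + 24 * a ^ 2 + 32 * a + 16 := by
  have key : ∀ n : ℕ,
      ((TQ n).card * 16 + (if Odd n then 1 else 0)
          = n ^ 4 + 8 * n ^ 3 + 24 * n ^ 2 + 32 * n + 16) ∧
      ((TQ (n+1)).card * 16 + (if Odd (n+1) then 1 else 0)
          = (n+1) ^ 4 + 8 * (n+1) ^ 3 + 24 * (n+1) ^ 2 + 32 * (n+1) + 16) := by
    intro n
    induction n with
    | zero => constructor <;> norm_num <;> rfl
    | succ n ih =>
      obtain ⟨h0, h1⟩ := ih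
      refine ⟨h1, ?_⟩
      have hT2 := TC_succ (n+1)
      have hT1 := TC_succ n
      have hG := G_card (n+1)
      have hodd : Odd (n+2) ↔ Odd n :=
        ⟨fun ⟨k, hk⟩ => ⟨k - 1, by omega⟩, fun ⟨k, hk⟩ => ⟨k + 1, by omega⟩⟩
      rw [show n + 1 + 1 = n + 2 from rfl] at *
      rw [if_congr hodd rfl rfl]
      rcases Nat.even_or_odd n with he | ho
      · rw [if_neg (by simpa [Nat.not_odd_iff_even] using he)] at h0 ⊢
        zify at h0 hT1 hT2 hG ⊢
        linear_combination h0 + 16 * hT2 + 16 * hT1 + 8 * hG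
      · rw [if_pos ho] at h0 ⊢
        zify at h0 hT1 hT2 hG ⊢
        linear_combination h0 + 16 * hT2 + 16 * hT1 + 8 * hG
  exact (key a).1

/-- The assignment function associated with a quadruple. -/
def Phi (a : ℕ) (v : ℕ × ℕ × ℕ × ℕ) : Finset (Fin 3) → ℕ := fun S =>
  if S = {0, 1} then v.1
  else if S = {0, 2} then v.2.1
  else if S = {1, 2} then v.2.2.1
  else if S = {0, 1, 2} then v.2.2.2
  else if S = {0} then a - (v.1 + v.2.1 + v.2.2.2)
  else if S = {1} then a - (v.1 + v.2.2.1 + v.2.2.2)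
  else if S = {2} then a - (v.2.1 + v.2.2.1 + v.2.2.2)
  else 0

lemma Phi_01 (a : ℕ) (v : ℕ × ℕ × ℕ × ℕ) : Phi a v {0, 1} = v.1 := by
  unfold Phi; rw [if_pos rfl]

lemma Phi_02 (a : ℕ) (v : ℕ × ℕ × ℕ × ℕ) : Phi a v {0, 2} = v.2.1 := by
  unfold Phi; rw [if_neg (by decide), if_pos rfl]

lemma Phi_12 (a : ℕ) (v : ℕ × ℕ × ℕ × ℕ) : Phi a v {1, 2} = v.2.2.1 := by
  unfold Phi; rw [if_neg (by decide), if_neg (by decide), if_pos rfl]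

lemma Phi_012 (a : ℕ) (v : ℕ × ℕ × ℕ × ℕ) : Phi a v {0, 1, 2} = v.2.2.2 := by
  unfold Phi; rw [if_neg (by decide), if_neg (by decide), if_neg (by decide), if_pos rfl]

lemma Phi_0 (a : ℕ) (v : ℕ × ℕ × ℕ × ℕ) :
    Phi a v {0} = a - (v.1 + v.2.1 + v.2.2.2) := by
  unfold Phi
  rw [if_neg (by decide), if_neg (by decide), if_neg (by decide), if_neg (by decide),
    if_pos rfl]

lemma Phi_1 (a : ℕ) (v : ℕ × ℕ × ℕ × ℕ) :
    Phi a v {1} = a - (v.1 + v.2.2.1 + v.2.2.2) := by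
  unfold Phi
  rw [if_neg (by decide), if_neg (by decide), if_neg (by decide), if_neg (by decide),
    if_neg (by decide), if_pos rfl]

lemma Phi_2 (a : ℕ) (v : ℕ × ℕ × ℕ × ℕ) :
    Phi a v {2} = a - (v.2.1 + v.2.2.1 + v.2.2.2) := by
  unfold Phi
  rw [if_neg (by decide), if_neg (by decide), if_neg (by decide), if_neg (by decide),
    if_neg (by decide), if_neg (by decide), if_pos rfl]

lemma Phi_empty (a : ℕ) (v : ℕ × ℕ × ℕ × ℕ) : Phi a v ∅ = 0 := by
  unfold Phi
  rw [if_neg (by decide), if_neg (by decide), if_neg (by decide), if_neg (by decide),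
    if_neg (by decide), if_neg (by decide), if_neg (by decide)]

lemma filter0 : Finset.univ.filter (fun S : Finset (Fin 3) => (0 : Fin 3) ∈ S)
    = {{0}, {0, 1}, {0, 2}, {0, 1, 2}} := by decide

lemma filter1 : Finset.univ.filter (fun S : Finset (Fin 3) => (1 : Fin 3) ∈ S)
    = {{1}, {0, 1}, {1, 2}, {0, 1, 2}} := by decide

lemma filter2 : Finset.univ.filter (fun S : Finset (Fin 3) => (2 : Fin 3) ∈ S)
    = {{2}, {0, 2}, {1, 2}, {0, 1, 2}} := by decide

lemma sum4 (x : Finset (Fin 3) → ℕ) {A B C D : Finset (Fin 3)}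
    (hAB : A ≠ B) (hAC : A ≠ C) (hAD : A ≠ D) (hBC : B ≠ C) (hBD : B ≠ D) (hCD : C ≠ D) :
    ∑ S ∈ ({A, B, C, D} : Finset (Finset (Fin 3))), x S = x A + x B + x C + x D := by
  rw [Finset.sum_insert (by simp [hAB, hAC, hAD]),
    Finset.sum_insert (by simp [hBC, hBD]),
    Finset.sum_insert (by simp [hCD]), Finset.sum_singleton]
  ring

lemma set_eq (a : ℕ) :
    {x : Finset (Fin 3) → ℕ |
        x ∅ = 0 ∧
        ∀ i : Fin 3, ∑ S ∈ Finset.univ.filter (fun S : Finset (Fin 3) => i ∈ S), x S = a}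
      = Phi a '' ↑(TQ a) := by
  ext x
  constructor
  · rintro ⟨hempty, hsum⟩
    have h0 := hsum 0
    have h1 := hsum 1
    have h2 := hsum 2
    rw [filter0, sum4 x (by decide) (by decide) (by decide) (by decide) (by decide)
      (by decide)] at h0
    rw [filter1, sum4 x (by decide) (by decide) (by decide) (by decide) (by decide)
      (by decide)] at h1
    rw [filter2, sum4 x (by decide) (by decide) (by decide) (by decide) (by decide)
      (by decide)] at h2
    refine ⟨(x {0, 1}, x {0, 2}, x {1, 2}, x {0, 1, 2}), ?_, ?_⟩
    · simp only [mem_coe, TQ, mem_filter, mem_product, mem_range]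
      omega
    · funext S
      have hS : S = ∅ ∨ S = {0} ∨ S = {1} ∨ S = {2} ∨ S = {0, 1} ∨ S = {0, 2}
          ∨ S = {1, 2} ∨ S = {0, 1, 2} := by
        revert S; decide
      rcases hS with h | h | h | h | h | h | h | h <;> subst h <;>
        simp only [Phi_empty, Phi_0, Phi_1, Phi_2, Phi_01, Phi_02, Phi_12, Phi_012] <;>
        omega
  · rintro ⟨v, hv, rfl⟩
    simp only [mem_coe, TQ, mem_filter, mem_product, mem_range] at hv
    refine ⟨Phi_empty a v, ?_⟩
    intro i
    have hi : i = 0 ∨ i = 1 ∨ i = 2 := by omega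
    rcases hi with h | h | h <;> subst h
    · rw [filter0, sum4 _ (by decide) (by decide) (by decide) (by decide) (by decide)
        (by decide), Phi_0, Phi_01, Phi_02, Phi_012]
      omega
    · rw [filter1, sum4 _ (by decide) (by decide) (by decide) (by decide) (by decide)
        (by decide), Phi_1, Phi_01, Phi_12, Phi_012]
      omega
    · rw [filter2, sum4 _ (by decide) (by decide) (by decide) (by decide) (by decide)
        (by decide), Phi_2, Phi_02, Phi_12, Phi_012]
      omega

lemma Phi_inj (a : ℕ) : Function.Injective (Phi a) := by
  intro v w h
  have h1 := congrFun h {0, 1}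
  have h2 := congrFun h {0, 2}
  have h3 := congrFun h {1, 2}
  have h4 := congrFun h {0, 1, 2}
  rw [Phi_01, Phi_01] at h1
  rw [Phi_02, Phi_02] at h2
  rw [Phi_12, Phi_12] at h3
  rw [Phi_012, Phi_012] at h4
  exact Prod.ext h1 (Prod.ext h2 (Prod.ext h3 h4))

/-- Statement: the number of `a`-list assignments on 3 vertices up to
proper-intersection equivalence, i.e. vectors `x` of nonnegative integers
indexed by the nonempty subsets of `{1,2,3}` with `∑_{S ∋ i} x S = a` for each
vertex `i`, is `(a⁴ + 8a³ + 24a² + 32a + 16 − ε(a))/16` with `ε(a) = 1` for odd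
`a` and `0` for even `a` (the division being exact). -/
theorem card_list_assignments_three (a : ℕ) :
    Set.ncard {x : Finset (Fin 3) → ℕ |
        x ∅ = 0 ∧
        ∀ i : Fin 3, ∑ S ∈ Finset.univ.filter (fun S : Finset (Fin 3) => i ∈ S), x S = a}
      * 16 =
    a ^ 4 + 8 * a ^ 3 + 24 * a ^ 2 + 32 * a + 16 - (if Odd a then 1 else 0) := by
  have hcard := TC_card a
  rw [set_eq a, Set.ncard_image_of_injective _ (Phi_inj a), Set.ncard_coe_finset]
  generalize hP : a ^ 4 + 8 * a ^ 3 + 24 * a ^ 2 + 32 * a + 16 = P at *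
  split_ifs at hcard ⊢ <;> omega
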